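/- Let ε, ε'' ∈ {+1, −1} with (ε, ε'') ≠ (1, 1). Let μ ≥ 1, let L : ℂ^μ → ℂ^μ be a unitary linear map with L L̄ = L̄ L = ε·id (where L̄ = J₀ L J₀ and J₀ is entrywise complex conjugation), and let ℓ : ℂ^μ → ℂ^μ satisfy ℓ† = ℓ, ℓ² = id, and L ℓ̄ = ε'' ℓ L. Then μ is even and there exists an orthonormal basis {v_p}_{1 ≤ p ≤ μ} of eigenvectors of ℓ, say ℓ v_p = s_p v_p with s_p ∈ {+1,−1}, such that v_{2a} = L(v̄_{2a−1}), v_{2a−1} = ε L(v̄_{2a}), and s_{2a} = ε'' s_{2a−1} for every a = 1, …, μ/2. Moreover, when ε'' = −1 the basis can be chosen so that in addition s_{2a} = +1 and s_{2a−1} = −1 for all a. -/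

import Mathlib

/-- Entrywise complex conjugation `J₀` on `ℂ^μ`. -/
noncomputable def conjE {μ : ℕ} (v : EuclideanSpace ℂ (Fin μ)) : EuclideanSpace ℂ (Fin μ) :=
  WithLp.toLp 2 (fun p => star (v p))

/-- The normal-form property of an orthonormal basis `b` with signs `s` for the pair `(L, ℓ)`:
the basis consists of `±1`-eigenvectors of `ℓ` (eigenvalue `s p`), and (0-based indexing,
where the pair `(2a, 2a+1)` corresponds to the paper's `(2a-1, 2a)`)
`b (2a+1) = L (conj (b (2a)))`, `b (2a) = ε • L (conj (b (2a+1)))`, and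
`s (2a+1) = ε'' * s (2a)`. -/
def KOBasisProp (μ : ℕ) (ε ε'' : ℝ)
    (L ℓ : EuclideanSpace ℂ (Fin μ) →ₗ[ℂ] EuclideanSpace ℂ (Fin μ))
    (b : OrthonormalBasis (Fin μ) ℂ (EuclideanSpace ℂ (Fin μ)))
    (s : Fin μ → ℝ) : Prop :=
  (∀ p, s p = 1 ∨ s p = -1) ∧
  (∀ p, ℓ (b p) = (s p : ℂ) • b p) ∧
  ∀ (a : ℕ) (h : 2 * a + 1 < μ),
    b ⟨2 * a + 1, h⟩ = L (conjE (b ⟨2 * a, by omega⟩)) ∧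
    b ⟨2 * a, by omega⟩ = (ε : ℂ) • L (conjE (b ⟨2 * a + 1, h⟩)) ∧
    s ⟨2 * a + 1, h⟩ = ε'' * s ⟨2 * a, by omega⟩

open scoped ComplexInnerProductSpace

section Key
variable {μ : ℕ}
local notation "E" => EuclideanSpace ℂ (Fin μ)

lemma exists_eigvec (ε'' : ℝ)
    (ℓ : E →ₗ[ℂ] E) (A : E → E)
    (hAnorm : ∀ x, ⟪A x, A x⟫ = ⟪x, x⟫)
    (hAl : ∀ x, A (ℓ x) = (ε'' : ℂ) • ℓ (A x))
    (hll : ∀ x, ℓ (ℓ x) = x)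
    (V : Submodule ℂ E) (hV0 : ∃ x ∈ V, x ≠ 0)
    (hlV : ∀ x ∈ V, ℓ x ∈ V) (hAV : ∀ x ∈ V, A x ∈ V) :
    ∃ (v : E) (t : ℝ), v ∈ V ∧ ⟪v, v⟫ = 1 ∧ (t = 1 ∨ t = -1) ∧ ℓ v = (t : ℂ) • v ∧
      (ε'' = -1 → t = -1) := by
  obtain ⟨x, hxV, hx0⟩ := hV0
  -- first get an unnormalized eigenvector
  obtain ⟨u, t, huV, hu0, ht, hlu, ht''⟩ :
      ∃ (u : E) (t : ℝ), u ∈ V ∧ u ≠ 0 ∧ (t = 1 ∨ t = -1) ∧ ℓ u = (t : ℂ) • u ∧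
        (ε'' = -1 → t = -1) := by
    by_cases hlx : ℓ x = x
    · by_cases hε''1 : ε'' = -1
      · refine ⟨A x, -1, hAV x hxV, ?_, Or.inr rfl, ?_, fun _ => rfl⟩
        · intro h
          apply hx0
          have hz : (⟪x, x⟫ : ℂ) = 0 := by rw [← hAnorm x, h, inner_zero_left]
          exact inner_self_eq_zero.mp hz
        · have h := hAl x
          rw [hlx, hε''1] at h
          have h' : A x = -(ℓ (A x)) := by
            refine h.trans ?_
            push_cast; rw [neg_smul, one_smul]
          have h2 : ℓ (A x) = -(A x) := by
            have h3 := congrArg ℓ h'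
            rwa [map_neg, hll] at h3
          rw [h2]; push_cast; rw [neg_smul, one_smul]
      · refine ⟨x, 1, hxV, hx0, Or.inl rfl, by simpa using hlx, fun h => absurd h hε''1⟩
    · refine ⟨x - ℓ x, -1, V.sub_mem hxV (hlV x hxV), sub_ne_zero.mpr (fun h => hlx h.symm),
        Or.inr rfl, ?_, fun _ => rfl⟩
      push_cast
      rw [map_sub, hll, neg_smul, one_smul]
      abel
  -- normalize
  have hnu : ‖u‖ ≠ 0 := norm_ne_zero_iff.mpr hu0
  refine ⟨((‖u‖⁻¹ : ℝ) : ℂ) • u, t, V.smul_mem _ huV, ?_, ht, ?_, ht''⟩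
  · rw [inner_self_eq_norm_sq_to_K]
    rw [norm_smul]
    simp [abs_of_nonneg, inv_mul_cancel₀ hnu]
  · rw [map_smul, hlu, smul_comm]

set_option maxHeartbeats 1000000 in
lemma key_induction (ε ε'' : ℝ) (hε : ε = 1 ∨ ε = -1) (hε'' : ε'' = 1 ∨ ε'' = -1)
    (hne : ¬(ε = 1 ∧ ε'' = 1))
    (ℓ : E →ₗ[ℂ] E) (A : E → E)
    (hAsmul : ∀ (c : ℂ) (x : E), A (c • x) = (starRingEnd ℂ c) • A x)
    (hAinner : ∀ x y, ⟪A x, A y⟫ = ⟪y, x⟫)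
    (hAA : ∀ x, A (A x) = (ε : ℂ) • x)
    (hAl : ∀ x, A (ℓ x) = (ε'' : ℂ) • ℓ (A x))
    (hlsa : ∀ x y, ⟪ℓ x, y⟫ = ⟪x, ℓ y⟫)
    (hll : ∀ x, ℓ (ℓ x) = x) :
    ∀ (m : ℕ) (V : Submodule ℂ E), Module.finrank ℂ V = m →
      (∀ x ∈ V, ℓ x ∈ V) → (∀ x ∈ V, A x ∈ V) →
      Even m ∧ ∃ (f : Fin m → E) (s : Fin m → ℝ),
        Orthonormal ℂ f ∧ (∀ i, f i ∈ V) ∧ V ≤ Submodule.span ℂ (Set.range f) ∧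
        (∀ p, s p = 1 ∨ s p = -1) ∧ (∀ p, ℓ (f p) = ((s p : ℝ) : ℂ) • f p) ∧
        (∀ (a : ℕ) (h : 2 * a + 1 < m),
          f ⟨2 * a + 1, h⟩ = A (f ⟨2 * a, by omega⟩) ∧
          f ⟨2 * a, by omega⟩ = (ε : ℂ) • A (f ⟨2 * a + 1, h⟩) ∧
          s ⟨2 * a + 1, h⟩ = ε'' * s ⟨2 * a, by omega⟩ ∧
          (ε'' = -1 → s ⟨2 * a + 1, h⟩ = 1 ∧ s ⟨2 * a, by omega⟩ = -1)) := by
  have hε''sq : (ε'' : ℂ) * (ε'' : ℂ) = 1 := by rcases hε'' with h | h <;> rw [h] <;> norm_num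
  have hεsq : (ε : ℂ) * (ε : ℂ) = 1 := by rcases hε with h | h <;> rw [h] <;> norm_num
  intro m
  induction m using Nat.strong_induction_on with
  | _ m IH =>
  intro V hrank hlV hAV
  rcases Nat.eq_zero_or_pos m with hm0 | hmpos
  · subst hm0
    exact ⟨Even.zero, fun i => i.elim0, fun i => i.elim0,
      ⟨fun i => i.elim0, fun i => i.elim0⟩, fun i => i.elim0,
      by
        have hVbot : V = ⊥ := Submodule.finrank_eq_zero.mp hrank
        rw [hVbot]; exact bot_le,
      fun p => p.elim0, fun p => p.elim0, fun a h => by omega⟩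
  -- m ≥ 1 : get an eigenvector pair
  have hVne : ∃ x ∈ V, x ≠ 0 := by
    rw [← Submodule.ne_bot_iff]
    intro h
    rw [h] at hrank
    simp at hrank
    omega
  obtain ⟨v, t, hvV, hvv, ht, hlv, ht''⟩ :=
    exists_eigvec ε'' ℓ A (fun x => hAinner x x) hAl hll V hVne hlV hAV
  set w := A v with hw
  have hwV : w ∈ V := hAV v hvV
  have hww : ⟪w, w⟫ = (1 : ℂ) := (hAinner v v).trans hvv
  have h0 : (t : ℂ) • w = (ε'' : ℂ) • ℓ w := by
    have h := hAl v
    rw [hlv, hAsmul, Complex.conj_ofReal] at h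
    exact h
  have hlw : ℓ w = ((ε'' * t : ℝ) : ℂ) • w := by
    have h1 : (ε'' : ℂ) • ((t : ℂ) • w) = (ε'' : ℂ) • ((ε'' : ℂ) • ℓ w) := by rw [h0]
    rw [smul_smul, smul_smul, hε''sq, one_smul] at h1
    rw [← h1]
    push_cast
    ring_nf
  have hvw : ⟪v, w⟫ = (0 : ℂ) := by
    by_cases hc : ε'' = -1
    · have h1 := hlsa v w
      rw [hlv, hlw, inner_smul_left, inner_smul_right, Complex.conj_ofReal] at h1
      have ht0 : (t : ℂ) ≠ 0 := by rcases ht with h | h <;> rw [h] <;> norm_num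
      have h2 : (2 * t : ℂ) * ⟪v, w⟫ = 0 := by
        rw [hc] at h1
        push_cast at h1 ⊢
        linear_combination h1
      rcases mul_eq_zero.mp h2 with h3 | h3
      · exfalso; apply ht0; push_cast at h3 ⊢; linear_combination h3 / 2
      · exact h3
    · have hε''1 : ε'' = 1 := hε''.resolve_right hc
      have hε1 : ε = -1 := by
        rcases hε with h | h
        · exact absurd ⟨h, hε''1⟩ hne
        · exact h
      have h1 := hAinner v (A v)
      rw [hAA, inner_smul_right, hε1] at h1
      push_cast at h1
      have h2 : ⟪A v, v⟫ = (0 : ℂ) := by linear_combination (-1 / 2 : ℂ) * h1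
      exact inner_eq_zero_symm.mp h2
  have hwv : ⟪w, v⟫ = (0 : ℂ) := inner_eq_zero_symm.mp hvw
  -- the two-dimensional subspace W
  set W : Submodule ℂ E := Submodule.span ℂ {v, w} with hWdef
  have hvW : v ∈ W := Submodule.subset_span (Set.mem_insert _ _)
  have hwW : w ∈ W := Submodule.subset_span (Set.mem_insert_of_mem _ rfl)
  have hWV : W ≤ V := by
    rw [hWdef, Submodule.span_le]
    rintro y (rfl | rfl)
    · exact hvV
    · exact hwV
  -- orthonormality of the pair
  have g0 : Fin 2 → E := ![v, w]
  have hrange : Set.range (![v, w] : Fin 2 → E) = {v, w} := by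
    ext y
    constructor
    · rintro ⟨i, rfl⟩
      fin_cases i
      · exact Set.mem_insert _ _
      · exact Set.mem_insert_of_mem _ rfl
    · rintro (rfl | rfl)
      · exact ⟨0, rfl⟩
      · exact ⟨1, rfl⟩
  have hon0 : Orthonormal ℂ (![v, w] : Fin 2 → E) := by
    have hwn : ‖w‖ = 1 := by
      have h3 := hww
      rw [inner_self_eq_norm_sq_to_K] at h3
      have h4 : ‖w‖ ^ 2 = 1 := by
        rw [← RCLike.ofReal_pow, ← RCLike.ofReal_one] at h3
        exact RCLike.ofReal_injective h3
      nlinarith [norm_nonneg w]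
    have hvn : ‖v‖ = 1 := by
      have h3 := hvv
      rw [inner_self_eq_norm_sq_to_K] at h3
      have h4 : ‖v‖ ^ 2 = 1 := by
        rw [← RCLike.ofReal_pow, ← RCLike.ofReal_one] at h3
        exact RCLike.ofReal_injective h3
      nlinarith [norm_nonneg v]
    rw [orthonormal_iff_ite]
    intro i j
    fin_cases i <;> fin_cases j <;>
      simp [hvv, hww, hvw, hwv, hwn, hvn]
  have hWrank : Module.finrank ℂ W = 2 := by
    rw [hWdef, ← hrange, finrank_span_eq_card hon0.linearIndependent]
    simp
  have h2m : 2 ≤ m := by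
    rw [← hrank, ← hWrank]
    exact Submodule.finrank_mono hWV
  obtain ⟨m', rfl⟩ : ∃ m', m = m' + 2 := ⟨m - 2, by omega⟩
  -- the orthogonal complement inside V
  set V' : Submodule ℂ E := Wᗮ ⊓ V with hV'def
  have hWorth : ∀ x : E, ⟪v, x⟫ = 0 → ⟪w, x⟫ = 0 → x ∈ Wᗮ := by
    intro x h1 h2
    rw [Submodule.mem_orthogonal]
    intro u hu
    obtain ⟨a, b, rfl⟩ := Submodule.mem_span_pair.mp hu
    rw [inner_add_left, inner_smul_left, inner_smul_left, h1, h2]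
    ring
  have hV'v : ∀ x ∈ V', ⟪v, x⟫ = 0 ∧ ⟪w, x⟫ = 0 := by
    intro x hx
    exact ⟨(Submodule.mem_orthogonal _ _).mp hx.1 v hvW,
      (Submodule.mem_orthogonal _ _).mp hx.1 w hwW⟩
  have hlV' : ∀ x ∈ V', ℓ x ∈ V' := by
    intro x hx
    obtain ⟨h1, h2⟩ := hV'v x hx
    refine ⟨hWorth _ ?_ ?_, hlV x hx.2⟩
    · rw [← hlsa, hlv, inner_smul_left, h1, mul_zero]
    · rw [← hlsa, hlw, inner_smul_left, h2, mul_zero]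
  have hAV' : ∀ x ∈ V', A x ∈ V' := by
    intro x hx
    obtain ⟨h1, h2⟩ := hV'v x hx
    refine ⟨hWorth _ ?_ ?_, hAV x hx.2⟩
    · have hv' : v = (ε : ℂ) • A w := by
        rw [hw, hAA, smul_smul, hεsq, one_smul]
      rw [hv', inner_smul_left, hAinner, ← inner_conj_symm x w, h2]
      simp
    · rw [hw, hAinner, ← inner_conj_symm x v, h1]
      simp
  have hV'rank : Module.finrank ℂ V' = m' := by
    rw [hV'def]
    have hsup := Submodule.sup_orthogonal_inf_of_hasOrthogonalProjection hWV
    have hadd := Submodule.finrank_sup_add_finrank_inf_eq W (Wᗮ ⊓ V)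
    have hbot : W ⊓ (Wᗮ ⊓ V) = ⊥ := by
      rw [eq_bot_iff]
      refine le_trans (inf_le_inf_left W inf_le_left) ?_
      exact (Submodule.orthogonal_disjoint W).le_bot
    rw [hsup, hbot, hrank, hWrank] at hadd
    simp at hadd
    omega
  obtain ⟨hEven', f', s', hon', hmem', hspan', hsig', heig', hpair'⟩ :=
    IH m' (by omega) V' hV'rank hlV' hAV'
  -- combine the pair with the family from the smaller space
  obtain ⟨f, hf0, hf1, hfk⟩ :
      ∃ f : Fin (m' + 2) → E,
        (∀ (h : (0 : ℕ) < m' + 2), f ⟨0, h⟩ = v) ∧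
        (∀ (h : (1 : ℕ) < m' + 2), f ⟨1, h⟩ = w) ∧
        (∀ (k : ℕ) (h : k + 2 < m' + 2) (hk : k < m'), f ⟨k + 2, h⟩ = f' ⟨k, hk⟩) := by
    refine ⟨fun i => if _h0 : (i : ℕ) = 0 then v else if _h1 : (i : ℕ) = 1 then w
      else f' ⟨(i : ℕ) - 2, by have := i.isLt; omega⟩, fun h => by simp, fun h => by simp,
      fun k h hk => by simp⟩
  obtain ⟨s, hs0, hs1, hsk⟩ :
      ∃ s : Fin (m' + 2) → ℝ,
        (∀ (h : (0 : ℕ) < m' + 2), s ⟨0, h⟩ = t) ∧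
        (∀ (h : (1 : ℕ) < m' + 2), s ⟨1, h⟩ = ε'' * t) ∧
        (∀ (k : ℕ) (h : k + 2 < m' + 2) (hk : k < m'), s ⟨k + 2, h⟩ = s' ⟨k, hk⟩) := by
    refine ⟨fun i => if _h0 : (i : ℕ) = 0 then t else if _h1 : (i : ℕ) = 1 then ε'' * t
      else s' ⟨(i : ℕ) - 2, by have := i.isLt; omega⟩, fun h => by simp, fun h => by simp,
      fun k h hk => by simp⟩
  have hfcases : ∀ i : Fin (m' + 2),
      ((i : ℕ) = 0 ∧ f i = v ∧ s i = t) ∨ ((i : ℕ) = 1 ∧ f i = w ∧ s i = ε'' * t) ∨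
      (∃ p : Fin m', (i : ℕ) = (p : ℕ) + 2 ∧ f i = f' p ∧ s i = s' p) := by
    rintro ⟨iv, hi⟩
    rcases iv with _ | _ | iv
    · exact Or.inl ⟨rfl, hf0 hi, hs0 hi⟩
    · exact Or.inr (Or.inl ⟨rfl, hf1 hi, hs1 hi⟩)
    · exact Or.inr (Or.inr ⟨⟨iv, by omega⟩, rfl, hfk iv hi (by omega), hsk iv hi (by omega)⟩)
  have hne2 : ∀ {i j : Fin (m' + 2)}, (i : ℕ) ≠ (j : ℕ) → i ≠ j :=
    fun h hij => h (congrArg Fin.val hij)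
  have hvf' : ∀ p, ⟪v, f' p⟫ = (0 : ℂ) := fun p => (hV'v _ (hmem' p)).1
  have hwf' : ∀ p, ⟪w, f' p⟫ = (0 : ℂ) := fun p => (hV'v _ (hmem' p)).2
  have hf'v : ∀ p, ⟪f' p, v⟫ = (0 : ℂ) := fun p => inner_eq_zero_symm.mp (hvf' p)
  have hf'w : ∀ p, ⟪f' p, w⟫ = (0 : ℂ) := fun p => inner_eq_zero_symm.mp (hwf' p)
  have honf : Orthonormal ℂ f := by
    rw [orthonormal_iff_ite]
    intro i j
    obtain hi0 | hi1 | ⟨p, hp, hfp, -⟩ := hfcases i <;>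
      obtain hj0 | hj1 | ⟨q, hq, hfq, -⟩ := hfcases j
    · rw [hi0.2.1, hj0.2.1, if_pos (Fin.ext (by omega : (i : ℕ) = (j : ℕ)))]
      exact hvv
    · rw [hi0.2.1, hj1.2.1, if_neg (hne2 (by omega))]
      exact hvw
    · rw [hi0.2.1, hfq, if_neg (hne2 (by omega))]
      exact hvf' q
    · rw [hi1.2.1, hj0.2.1, if_neg (hne2 (by omega))]
      exact hwv
    · rw [hi1.2.1, hj1.2.1, if_pos (Fin.ext (by omega : (i : ℕ) = (j : ℕ)))]
      exact hww
    · rw [hi1.2.1, hfq, if_neg (hne2 (by omega))]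
      exact hwf' q
    · rw [hfp, hj0.2.1, if_neg (hne2 (by omega))]
      exact hf'v p
    · rw [hfp, hj1.2.1, if_neg (hne2 (by omega))]
      exact hf'w p
    · rw [hfp, hfq, orthonormal_iff_ite.mp hon' p q]
      by_cases hpq : p = q
      · rw [if_pos hpq, if_pos (Fin.ext (by rw [hp, hq, hpq]))]
      · have hv' : (p : ℕ) ≠ (q : ℕ) := fun hx => hpq (Fin.ext hx)
        rw [if_neg hpq, if_neg (hne2 (by omega))]
  have hmemf : ∀ i, f i ∈ V := by
    intro i
    obtain h | h | ⟨p, -, hfp, -⟩ := hfcases i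
    · rw [h.2.1]; exact hvV
    · rw [h.2.1]; exact hwV
    · rw [hfp]; exact (hmem' p).2
  have hspanf : V ≤ Submodule.span ℂ (Set.range f) := by
    have hsup := Submodule.sup_orthogonal_inf_of_hasOrthogonalProjection hWV
    rw [← hsup]
    apply sup_le
    · rw [hWdef, Submodule.span_le]
      rintro y (rfl | rfl)
      · exact Submodule.subset_span ⟨⟨0, by omega⟩, hf0 (by omega)⟩
      · exact Submodule.subset_span ⟨⟨1, by omega⟩, hf1 (by omega)⟩
    · refine le_trans (hV'def ▸ hspan') (Submodule.span_mono ?_)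
      rintro y ⟨p, rfl⟩
      refine ⟨⟨(p : ℕ) + 2, by omega⟩, ?_⟩
      rw [hfk _ _ p.isLt]
  have hsigf : ∀ p, s p = 1 ∨ s p = -1 := by
    intro i
    obtain h | h | ⟨p, -, -, hsp⟩ := hfcases i
    · rw [h.2.2]; exact ht
    · rw [h.2.2]
      rcases hε'' with h' | h' <;> rcases ht with h'' | h'' <;> rw [h', h''] <;> norm_num
    · rw [hsp]; exact hsig' p
  have heigf : ∀ p, ℓ (f p) = ((s p : ℝ) : ℂ) • f p := by
    intro i
    obtain h | h | ⟨p, -, hfp, hsp⟩ := hfcases i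
    · rw [h.2.1, h.2.2]; exact hlv
    · rw [h.2.1, h.2.2]; exact hlw
    · rw [hfp, hsp]; exact heig' p
  refine ⟨?_, f, s, honf, hmemf, hspanf, hsigf, heigf, ?_⟩
  · rcases hEven' with ⟨k, hk⟩
    exact ⟨k + 1, by omega⟩
  intro a h
  rcases a with _ | a'
  · have e1 : (⟨2 * 0 + 1, h⟩ : Fin (m' + 2)) = ⟨1, by omega⟩ := Fin.ext (by norm_num)
    have e0 : (⟨2 * 0, by omega⟩ : Fin (m' + 2)) = ⟨0, by omega⟩ := Fin.ext (by norm_num)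
    have d1 : f ⟨2 * 0 + 1, h⟩ = w := by rw [e1]; exact hf1 _
    have d0 : f ⟨2 * 0, by omega⟩ = v := by rw [e0]; exact hf0 _
    have ds1 : s ⟨2 * 0 + 1, h⟩ = ε'' * t := by rw [e1]; exact hs1 _
    have ds0 : s ⟨2 * 0, by omega⟩ = t := by rw [e0]; exact hs0 _
    have h2' : v = (ε : ℂ) • A w := by rw [hw, hAA, smul_smul, hεsq, one_smul]
    refine ⟨d1.trans (hw.trans (congrArg A d0.symm)), d0.trans (h2'.trans (by rw [d1])),
      ?_, ?_⟩
    · rw [ds1, ds0]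
    · intro hc
      rw [ds1, ds0, ht'' hc, hc]
      norm_num
  · have h' : 2 * a' + 1 < m' := by omega
    have h'' : 2 * a' < m' := by omega
    obtain ⟨c1, c2, c3, c4⟩ := hpair' a' h'
    have e1 : (⟨2 * (a' + 1) + 1, h⟩ : Fin (m' + 2)) = ⟨(2 * a' + 1) + 2, by omega⟩ :=
      Fin.ext (by ring)
    have e0 : (⟨2 * (a' + 1), by omega⟩ : Fin (m' + 2)) = ⟨(2 * a') + 2, by omega⟩ :=
      Fin.ext (by ring)
    have d1 : f ⟨2 * (a' + 1) + 1, h⟩ = f' ⟨2 * a' + 1, h'⟩ := by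
      rw [e1]; exact hfk _ _ h'
    have d0 : f ⟨2 * (a' + 1), by omega⟩ = f' ⟨2 * a', h''⟩ := by
      rw [e0]; exact hfk _ _ h''
    have ds1 : s ⟨2 * (a' + 1) + 1, h⟩ = s' ⟨2 * a' + 1, h'⟩ := by
      rw [e1]; exact hsk _ _ h'
    have ds0 : s ⟨2 * (a' + 1), by omega⟩ = s' ⟨2 * a', h''⟩ := by
      rw [e0]; exact hsk _ _ h''
    refine ⟨d1.trans (c1.trans (congrArg A d0.symm)), d0.trans (c2.trans (by rw [d1])),
      ds1.trans (c3.trans (by rw [ds0])), ?_⟩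
    intro hc
    obtain ⟨u1, u0⟩ := c4 hc
    exact ⟨ds1.trans u1, ds0.trans u0⟩
end Key

/-- Normal form of the real structure and grading on a diagonal multiplicity
space in the even KO-dimensions 2, 4 and 6: with `(ε, ε'') ≠ (1,1)`, `L` unitary with
`L L̄ = L̄ L = ε·id`, `ℓ` a self-adjoint involution with `L ℓ̄ = ε'' ℓ L`, the dimension `μ`
is even and a basis in normal form exists; when `ε'' = -1` the signs can moreover be
normalized to `s(2a+1) = +1`, `s(2a) = -1`. -/




theorem statement7 (μ : ℕ) (hμ : 1 ≤ μ) (ε ε'' : ℝ)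
    (hε : ε = 1 ∨ ε = -1) (hε'' : ε'' = 1 ∨ ε'' = -1)
    (hne : ¬(ε = 1 ∧ ε'' = 1))
    (L ℓ : EuclideanSpace ℂ (Fin μ) →ₗ[ℂ] EuclideanSpace ℂ (Fin μ))
    (hU1 : LinearMap.adjoint L ∘ₗ L = LinearMap.id)
    (hU2 : L ∘ₗ LinearMap.adjoint L = LinearMap.id)
    (h1 : ∀ v, L (conjE (L (conjE v))) = (ε : ℂ) • v)
    (h2 : ∀ v, conjE (L (conjE (L v))) = (ε : ℂ) • v)
    (hℓsa : LinearMap.adjoint ℓ = ℓ)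
    (hℓsq : ℓ ∘ₗ ℓ = LinearMap.id)
    (hcomm : ∀ v, L (conjE (ℓ (conjE v))) = (ε'' : ℂ) • ℓ (L v)) :
    Even μ ∧
    (∃ (b : OrthonormalBasis (Fin μ) ℂ (EuclideanSpace ℂ (Fin μ))) (s : Fin μ → ℝ),
      KOBasisProp μ ε ε'' L ℓ b s) ∧
    (ε'' = -1 →
      ∃ (b : OrthonormalBasis (Fin μ) ℂ (EuclideanSpace ℂ (Fin μ))) (s : Fin μ → ℝ),
        KOBasisProp μ ε ε'' L ℓ b s ∧
        ∀ (a : ℕ) (h : 2 * a + 1 < μ),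
          s ⟨2 * a + 1, h⟩ = 1 ∧ s ⟨2 * a, by omega⟩ = -1) := by
  classical
  set A : EuclideanSpace ℂ (Fin μ) → EuclideanSpace ℂ (Fin μ) := fun x => L (conjE x) with hA
  have hconj2 : ∀ x : EuclideanSpace ℂ (Fin μ), conjE (conjE x) = x := fun x => by
    ext p; simp [conjE]
  have hconjsmul : ∀ (c : ℂ) (x : EuclideanSpace ℂ (Fin μ)),
      conjE (c • x) = star c • conjE x := fun c x => by
    ext p; simp [conjE]
  have hconjinner : ∀ x y : EuclideanSpace ℂ (Fin μ), ⟪conjE x, conjE y⟫ = ⟪y, x⟫ :=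
    fun x y => by simp [conjE, PiLp.inner_apply, RCLike.inner_apply, mul_comm]
  have hLinner : ∀ x y : EuclideanSpace ℂ (Fin μ), ⟪L x, L y⟫ = ⟪x, y⟫ := by
    intro x y
    have hb : (LinearMap.adjoint L) (L y) = y := by
      have := LinearMap.ext_iff.mp hU1 y
      simpa using this
    rw [← LinearMap.adjoint_inner_right, hb]
  have hAsmul : ∀ (c : ℂ) (x : EuclideanSpace ℂ (Fin μ)),
      A (c • x) = (starRingEnd ℂ) c • A x := by
    intro c x
    rw [hA]
    simp only
    rw [hconjsmul, map_smul]
    rfl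
  have hAinner : ∀ x y, ⟪A x, A y⟫ = ⟪y, x⟫ := fun x y => (hLinner _ _).trans (hconjinner x y)
  have hAA : ∀ x, A (A x) = (ε : ℂ) • x := h1
  have hAl : ∀ x, A (ℓ x) = (ε'' : ℂ) • ℓ (A x) := by
    intro x
    have h := hcomm (conjE x)
    rwa [hconj2] at h
  have hlsa' : ∀ x y, ⟪ℓ x, y⟫ = ⟪x, ℓ y⟫ := by
    intro x y
    conv_lhs => rw [← hℓsa]
    exact LinearMap.adjoint_inner_left _ _ _
  have hll : ∀ x, ℓ (ℓ x) = x := fun x => by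
    have := LinearMap.ext_iff.mp hℓsq x
    simpa using this
  have hrank : Module.finrank ℂ (⊤ : Submodule ℂ (EuclideanSpace ℂ (Fin μ))) = μ := by
    simp [finrank_euclideanSpace_fin]
  obtain ⟨hEv, f, s, hon, hmem, hspan, hsig, heig, hpair⟩ :=
    key_induction ε ε'' hε hε'' hne ℓ A hAsmul hAinner hAA hAl hlsa' hll μ ⊤ hrank
      (fun x _ => Submodule.mem_top) (fun x _ => Submodule.mem_top)
  set b := OrthonormalBasis.mk hon hspan with hbdef
  have hb : ⇑b = f := OrthonormalBasis.coe_mk _ _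
  have hKO : KOBasisProp μ ε ε'' L ℓ b s := by
    refine ⟨hsig, ?_, ?_⟩
    · intro p
      rw [hb]
      exact heig p
    · intro a h
      simp only [hb]
      obtain ⟨c1, c2, c3, -⟩ := hpair a h
      exact ⟨c1, c2, c3⟩
  exact ⟨hEv, ⟨b, s, hKO⟩, fun hc => ⟨b, s, hKO, fun a h => (hpair a h).2.2.2 hc⟩⟩
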